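/- Let α, τ ∈ ℝ with α² + τ > 0, let υ₁, υ₂ ∈ ℝ with υ₂² > υ₁², and let p ∈ ℝ satisfy p² = 2(υ₂² − υ₁²). Define ψ(x) = υ₁·cosh(x) + υ₂·sinh(x) − p, a₀ = (1/3)·√(6(α² + τ)), and a₂ = 6p(α² + τ)/√(6(α² + τ)). Then for each sign σ ∈ {1, −1}, the function F(x) = σ·(a₀ + a₂/ψ(x)) satisfies (τ + α²)·F‴(x) − (3/2)·F′(x)·F(x)² = 0 at every x ∈ ℝ with ψ(x) ≠ 0. -/

import Mathlib

/-- The simplest-equation ansatz function `ψ(x) = υ₁ cosh x + υ₂ sinh x − p`. -/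
noncomputable def ψhyp (υ₁ υ₂ p : ℝ) : ℝ → ℝ :=
  fun x => υ₁ * Real.cosh x + υ₂ * Real.sinh x - p

/-- The hyperbolic-rational profile `F(x) = σ (a₀ + a₂/ψ(x))` with
`a₀ = (1/3)√(6(α²+τ))` and `a₂ = 6p(α²+τ)/√(6(α²+τ))`. -/
noncomputable def Fhyp (α τ υ₁ υ₂ p σ : ℝ) : ℝ → ℝ :=
  fun x => σ * ((1 / 3) * Real.sqrt (6 * (α ^ 2 + τ))
    + (6 * p * (α ^ 2 + τ) / Real.sqrt (6 * (α ^ 2 + τ))) / ψhyp υ₁ υ₂ p x)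

noncomputable def Dhyp (υ₁ υ₂ : ℝ) : ℝ → ℝ :=
  fun x => υ₁ * Real.sinh x + υ₂ * Real.cosh x

lemma hasDerivAt_psi (υ₁ υ₂ p : ℝ) (x : ℝ) :
    HasDerivAt (ψhyp υ₁ υ₂ p) (Dhyp υ₁ υ₂ x) x := by
  have h := (((Real.hasDerivAt_cosh x).const_mul υ₁).add
      ((Real.hasDerivAt_sinh x).const_mul υ₂)).sub_const p
  unfold ψhyp Dhyp
  exact h

lemma hasDerivAt_Dhyp (υ₁ υ₂ p : ℝ) (x : ℝ) :
    HasDerivAt (Dhyp υ₁ υ₂) (ψhyp υ₁ υ₂ p x + p) x := by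
  have h := ((Real.hasDerivAt_sinh x).const_mul υ₁).add
      ((Real.hasDerivAt_cosh x).const_mul υ₂)
  have e : ψhyp υ₁ υ₂ p x + p = υ₁ * Real.cosh x + υ₂ * Real.sinh x := by
    unfold ψhyp; ring
  rw [e]
  unfold Dhyp
  exact h


/-- Case-i of Section 4(I): the hyperbolic-rational family solves the
autonomous steady ODE `(τ+α²)F‴ − (3/2)F′F² = 0` wherever `ψ ≠ 0`. -/
theorem wbk_hyperbolic_solution (α τ υ₁ υ₂ p σ : ℝ)
    (hpos : α ^ 2 + τ > 0) (hυ : υ₂ ^ 2 > υ₁ ^ 2)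
    (hp : p ^ 2 = 2 * (υ₂ ^ 2 - υ₁ ^ 2)) (hσ : σ = 1 ∨ σ = -1) :
    ∀ x : ℝ, ψhyp υ₁ υ₂ p x ≠ 0 →
      (τ + α ^ 2) * deriv (deriv (deriv (Fhyp α τ υ₁ υ₂ p σ))) x
        - (3 / 2) * deriv (Fhyp α τ υ₁ υ₂ p σ) x * (Fhyp α τ υ₁ υ₂ p σ x) ^ 2 = 0 := by
  intro x hx
  set ψ : ℝ → ℝ := ψhyp υ₁ υ₂ p with hψdef
  set D : ℝ → ℝ := Dhyp υ₁ υ₂ with hDdef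
  set F : ℝ → ℝ := Fhyp α τ υ₁ υ₂ p σ with hFdef
  set s : ℝ := Real.sqrt (6 * (α ^ 2 + τ)) with hsdef
  have h6 : (0:ℝ) < 6 * (α ^ 2 + τ) := by positivity
  have hs2 : s ^ 2 = 6 * (α ^ 2 + τ) := Real.sq_sqrt h6.le
  have hs0 : s ≠ 0 := (Real.sqrt_pos.mpr h6).ne'
  set a₂ : ℝ := 6 * p * (α ^ 2 + τ) / s with ha2def
  have ha2 : a₂ = p * s := by
    rw [ha2def, div_eq_iff hs0]
    linear_combination -p * hs2
  have hFfun : F = fun y => σ * ((1/3) * s + a₂ / ψ y) := rfl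
  have hσ2 : σ ^ 2 = 1 := by rcases hσ with h | h <;> rw [h] <;> norm_num
  -- the open set where ψ ≠ 0
  have hψcont : Continuous ψ := by
    rw [hψdef]; unfold ψhyp; continuity
  have hS : IsOpen {y : ℝ | ψ y ≠ 0} := isOpen_compl_singleton.preimage hψcont
  -- first derivative
  set F1 : ℝ → ℝ := fun y => σ * (-(a₂ * D y) / ψ y ^ 2) with hF1def
  have hd1 : ∀ y, ψ y ≠ 0 → HasDerivAt F (F1 y) y := by
    intro y hy
    have h := (((hasDerivAt_const y a₂).div (hasDerivAt_psi υ₁ υ₂ p y) hy).const_add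
      ((1/3) * s)).const_mul σ
    rw [hFfun]
    refine h.congr_deriv ?_
    rw [hF1def, ← hψdef, ← hDdef]
    field_simp
    ring
  -- second derivative
  set F2 : ℝ → ℝ := fun y => σ * a₂ * (2 * D y ^ 2 - (ψ y + p) * ψ y) / ψ y ^ 3 with hF2def
  have hd2 : ∀ y, ψ y ≠ 0 → HasDerivAt F1 (F2 y) y := by
    intro y hy
    have hψ' := hasDerivAt_psi υ₁ υ₂ p y
    have hD' := hasDerivAt_Dhyp υ₁ υ₂ p y
    have hnum : HasDerivAt (fun y => -(a₂ * D y)) (-(a₂ * (ψ y + p))) y :=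
      (hD'.const_mul a₂).neg
    have hden : HasDerivAt (fun y => ψ y ^ 2) (2 * ψ y ^ 1 * D y) y := hψ'.pow 2
    have h := ((hnum.div hden (pow_ne_zero 2 hy))).const_mul σ
    refine h.congr_deriv ?_
    rw [hF2def]
    field_simp
    ring
  -- third derivative
  set F3 : ℝ → ℝ := fun y =>
    σ * a₂ * (-(D y) * ψ y ^ 2 + 6 * D y * (ψ y + p) * ψ y - 6 * D y ^ 3) / ψ y ^ 4 with hF3def
  have hd3 : ∀ y, ψ y ≠ 0 → HasDerivAt F2 (F3 y) y := by
    intro y hy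
    have hψ' := hasDerivAt_psi υ₁ υ₂ p y
    have hD' := hasDerivAt_Dhyp υ₁ υ₂ p y
    have hn1 : HasDerivAt (fun y => D y ^ 2) (2 * D y ^ 1 * (ψ y + p)) y := hD'.pow 2
    have hn2 : HasDerivAt (fun y => (ψ y + p) * ψ y)
        (D y * ψ y + (ψ y + p) * D y) y := (hψ'.add_const p).mul hψ'
    have hnum := ((hn1.const_mul 2).sub hn2).const_mul (σ * a₂)
    have hden : HasDerivAt (fun y => ψ y ^ 3) (3 * ψ y ^ 2 * D y) y := hψ'.pow 3
    have h := hnum.div hden (pow_ne_zero 3 hy)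
    refine h.congr_deriv ?_
    rw [hF3def]
    simp only [Pi.sub_apply]
    field_simp
    ring
  -- identify derivs with explicit formulas near x
  have hev : ∀ᶠ y in nhds x, ψ y ≠ 0 := hS.mem_nhds hx
  have e1 : deriv F =ᶠ[nhds x] F1 := hev.mono fun y hy => (hd1 y hy).deriv
  have e2 : deriv (deriv F) =ᶠ[nhds x] F2 := hev.mono fun y hy => by
    have hy' : ∀ᶠ z in nhds y, ψ z ≠ 0 := hS.mem_nhds hy
    have : deriv F =ᶠ[nhds y] F1 := hy'.mono fun z hz => (hd1 z hz).deriv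
    rw [this.deriv_eq, (hd2 y hy).deriv]
  have e3 : deriv (deriv (deriv F)) x = F3 x := by
    rw [e2.deriv_eq, (hd3 x hx).deriv]
  rw [e3, e1.self_of_nhds]
  -- the algebraic identity
  have hD2 : D x ^ 2 = (ψ x + p) ^ 2 + p ^ 2 / 2 := by
    have h1 := Real.cosh_sq_sub_sinh_sq x
    rw [hDdef, hψdef]; unfold Dhyp ψhyp
    linear_combination (υ₂ ^ 2 - υ₁ ^ 2) * h1 - (1/2) * hp
  have hτ : τ + α ^ 2 = s ^ 2 / 6 := by rw [hs2]; ring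
  rw [hF1def, hF3def, hFfun, ha2, hτ]
  have key : -ψ x ^ 2 + 6 * ψ x * (ψ x + p) - 6 * D x ^ 2 + σ ^ 2 * (ψ x + 3 * p) ^ 2 = 0 := by
    linear_combination (-6 : ℝ) * hD2 + (ψ x + 3 * p) ^ 2 * hσ2
  calc _ = s ^ 3 * σ * p * D x / (6 * ψ x ^ 4) *
        (-ψ x ^ 2 + 6 * ψ x * (ψ x + p) - 6 * D x ^ 2 + σ ^ 2 * (ψ x + 3 * p) ^ 2) := by
        field_simp
        ring
    _ = 0 := by rw [key, mul_zero]
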